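/- Let $1 \le t \le k_1 \le \cdots \le k_r \le n$ and suppose $n$ is sufficiently large in terms of $k_{r-1}, k_r, t$. Let $\mathcal{F}_1, \dots, \mathcal{F}_r$ be families of subsets of $[n]$ with each member of $\mathcal{F}_i$ having size at most $k_i$, such that $|A \cap B| \ge t$ for all $A \in \mathcal{F}_i$, $B \in \mathcal{F}_j$ with $i \ne j$. Then $\prod_{i=1}^r |\mathcal{F}_i| \le \prod_{i=1}^r \left( \sum_{j=0}^{k_i - t} \binom{n-t}{k_i - t - j} \right)$. -/

import Mathlib

open Finset


lemma cnt {n : ℕ} (T : Finset (Fin n)) (c : ℕ) :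
    ((Finset.univ : Finset (Finset (Fin n))).filter (fun A => T ⊆ A ∧ A.card ≤ c)).card
      ≤ ∑ s ∈ Finset.range (c + 1 - T.card), (n - T.card).choose s := by
  classical
  set src := (Finset.univ : Finset (Finset (Fin n))).filter (fun A => T ⊆ A ∧ A.card ≤ c) with hsrc
  set tgt := (Finset.range (c + 1 - T.card)).biUnion (fun s => Tᶜ.powersetCard s) with htgt
  have hmap : ∀ A ∈ src, A \ T ∈ tgt := by
    intro A hA
    rw [hsrc, mem_filter] at hA
    obtain ⟨-, hTA, hAc⟩ := hA
    have hcard : (A \ T).card = A.card - T.card := card_sdiff_of_subset hTA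
    have hTA' : T.card ≤ A.card := card_le_card hTA
    refine mem_biUnion.2 ⟨(A \ T).card, ?_, ?_⟩
    · rw [mem_range, hcard]; omega
    · rw [mem_powersetCard]
      refine ⟨fun x hx => ?_, rfl⟩
      rw [mem_compl]
      exact (mem_sdiff.1 hx).2
  have hinj : Set.InjOn (fun A => A \ T) src := by
    intro A hA B hB hAB
    simp only [hsrc, coe_filter, Set.mem_setOf_eq] at hA hB
    have h1 : A \ T ∪ T = B \ T ∪ T := by simpa using congrArg (· ∪ T) hAB
    rwa [sdiff_union_of_subset hA.2.1, sdiff_union_of_subset hB.2.1] at h1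
  calc src.card ≤ tgt.card := Finset.card_le_card_of_injOn _ hmap hinj
    _ ≤ ∑ s ∈ Finset.range (c + 1 - T.card), (Tᶜ.powersetCard s).card := card_biUnion_le
    _ ≤ ∑ s ∈ Finset.range (c + 1 - T.card), (n - T.card).choose s := by
        refine Finset.sum_le_sum fun s _ => ?_
        rw [card_powersetCard, card_compl]
        simp


lemma key (K t n u : ℕ) (ht : 1 ≤ t) (hu : 1 ≤ u) (htu : t + u ≤ K)
    (hn : (K.choose t)^2 * ((2*K).choose (t+1)) * K * K.factorial * 2^K + 2*K + t + 2 ≤ n) :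
    (K.choose t)^2 * ((2*K).choose (t+1)) * ∑ s ∈ Finset.range u, (n - t - 1).choose s
      ≤ (n - t).choose u := by
  set E := (K.choose t)^2 * ((2*K).choose (t+1)) with hE
  set M := E * K * K.factorial with hM
  have hP : M * 2^K + 2*K + t + 2 ≤ n := hn
  have huK : u ≤ K := by omega
  have hnK : 2*K + t + 2 ≤ n := by nlinarith [Nat.zero_le (M * 2^K)]
  -- Step A : each term bound
  have hA : ∑ s ∈ Finset.range u, (n - t - 1).choose s ≤ u * n^(u-1) := by
    have h1 : ∀ s ∈ Finset.range u, (n - t - 1).choose s ≤ n^(u-1) := by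
      intro s hs
      rw [mem_range] at hs
      calc (n - t - 1).choose s ≤ s.factorial * (n - t - 1).choose s :=
            Nat.le_mul_of_pos_left _ s.factorial_pos
        _ = (n - t - 1).descFactorial s := (Nat.descFactorial_eq_factorial_mul_choose _ _).symm
        _ ≤ (n - t - 1)^s := Nat.descFactorial_le_pow _ _
        _ ≤ n^s := Nat.pow_le_pow_left (by omega) _
        _ ≤ n^(u-1) := Nat.pow_le_pow_right (by omega) (by omega)
    calc ∑ s ∈ Finset.range u, (n - t - 1).choose s ≤ (Finset.range u).card • n^(u-1) :=
          Finset.sum_le_card_nsmul _ _ _ h1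
      _ = u * n^(u-1) := by simp [mul_comm]
  -- Step C : M * n^(u-1) ≤ (n - K + 1)^u
  have hC : M * n^(u-1) ≤ (n - K + 1)^u := by
    have h2 : n ≤ 2*(n - K + 1) := by omega
    have h3 : M * 2^(u-1) ≤ n - K + 1 := by
      have : M * 2^(u-1) ≤ M * 2^K :=
        Nat.mul_le_mul_left _ (Nat.pow_le_pow_right (by omega) (by omega))
      omega
    have hmain : 2^(u-1) * (M * n^(u-1)) ≤ 2^(u-1) * (n - K + 1)^u := by
      have hu' : u - 1 + 1 = u := by omega
      calc 2^(u-1) * (M * n^(u-1)) = (M * 2^(u-1)) * n^(u-1) := by ring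
        _ ≤ (n - K + 1) * n^(u-1) := Nat.mul_le_mul_right _ h3
        _ ≤ (n - K + 1) * (2*(n - K + 1))^(u-1) :=
            Nat.mul_le_mul_left _ (Nat.pow_le_pow_left h2 _)
        _ = 2^(u-1) * ((n - K + 1)^(u-1) * (n - K + 1)) := by rw [mul_pow]; ring
        _ = 2^(u-1) * (n - K + 1)^u := by rw [← pow_succ, hu']
    exact Nat.le_of_mul_le_mul_left hmain (Nat.pow_pos (by omega))
  -- Step D : (n - K + 1)^u ≤ u! * (n-t).choose u
  have hD : (n - K + 1)^u ≤ u.factorial * (n - t).choose u := by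
    calc (n - K + 1)^u ≤ (n - t + 1 - u)^u := Nat.pow_le_pow_left (by omega) _
      _ ≤ (n - t).descFactorial u := Nat.pow_sub_le_descFactorial _ _
      _ = u.factorial * (n - t).choose u := Nat.descFactorial_eq_factorial_mul_choose _ _
  -- combine
  have hfinal : u.factorial * (E * ∑ s ∈ Finset.range u, (n - t - 1).choose s)
      ≤ u.factorial * (n - t).choose u := by
    calc u.factorial * (E * ∑ s ∈ Finset.range u, (n - t - 1).choose s)
        ≤ u.factorial * (E * (u * n^(u-1))) :=
          Nat.mul_le_mul_left _ (Nat.mul_le_mul_left _ hA)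
      _ = E * u * u.factorial * n^(u-1) := by ring
      _ ≤ E * K * K.factorial * n^(u-1) := by
          refine Nat.mul_le_mul_right _ ?_
          exact Nat.mul_le_mul (Nat.mul_le_mul_left _ huK) (Nat.factorial_le huK)
      _ = M * n^(u-1) := by rw [hM]
      _ ≤ (n - K + 1)^u := hC
      _ ≤ u.factorial * (n - t).choose u := hD
  exact Nat.le_of_mul_le_mul_left hfinal u.factorial_pos

set_option maxHeartbeats 2000000 in
theorem stmt_15 : ∃ n0 : ℕ → ℕ → ℕ → ℕ,
    ∀ (n r : ℕ) (hr : 2 ≤ r) (t : ℕ) (kk : Fin r → ℕ),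
    1 ≤ t → (∀ j, t ≤ kk j) → Monotone kk → (∀ j, kk j ≤ n) →
    n0 (kk ⟨r - 2, by omega⟩) (kk ⟨r - 1, by omega⟩) t ≤ n →
    ∀ F : Fin r → Finset (Finset (Fin n)),
      (∀ i, ∀ A ∈ F i, A.card ≤ kk i) →
      (∀ i j, i ≠ j → ∀ A ∈ F i, ∀ B ∈ F j, t ≤ (A ∩ B).card) →
      ∏ i, (F i).card ≤
        ∏ i, ∑ j ∈ Finset.range (kk i - t + 1), (n - t).choose (kk i - t - j) := by
  classical
  refine ⟨fun _ K t =>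
    (K.choose t)^2 * ((2*K).choose (t+1)) * K * K.factorial * 2^K + 2*K + t + 2, ?_⟩
  intro n r hr t kk ht hkt hmono hkn hn F hcard hcross
  set K := kk ⟨r - 1, by omega⟩ with hKdef
  have hkK : ∀ i, kk i ≤ K := by
    intro i
    refine hmono ?_
    have := i.2
    exact Fin.le_def.mpr (by simp; omega)
  have hKt : t ≤ K := hkt _
  have hKn : K ≤ n := hkn _
  -- rewrite RHS
  set m : Fin r → ℕ := fun i => ∑ s ∈ Finset.range (kk i - t + 1), (n - t).choose s with hm
  have hRHS : ∀ i, ∑ j ∈ Finset.range (kk i - t + 1), (n - t).choose (kk i - t - j) = m i := by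
    intro i
    rw [hm]
    have h := Finset.sum_range_reflect (fun s => (n - t).choose s) (kk i - t + 1)
    simpa using h
  rw [Finset.prod_congr rfl fun i _ => hRHS i]
  -- empty case
  by_cases hemp : ∀ i, (F i).Nonempty
  swap
  · push_neg at hemp
    obtain ⟨i, hi⟩ := hemp
    have : ∏ i, (F i).card = 0 :=
      Finset.prod_eq_zero (mem_univ i) (by rw [hi, card_empty])
    simp [this]
  -- star bound
  have hstar : ∀ (S : Finset (Fin n)) (i : Fin r), S.card = t → (∀ A ∈ F i, S ⊆ A) →
      (F i).card ≤ m i := by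
    intro S i hS hSF
    have hsub : F i ⊆ (Finset.univ.filter (fun A => S ⊆ A ∧ A.card ≤ kk i)) := by
      intro A hA
      rw [mem_filter]
      exact ⟨mem_univ _, hSF A hA, hcard i A hA⟩
    have h1 := cnt S (kk i)
    rw [hS] at h1
    have h2 : kk i + 1 - t = kk i - t + 1 := by have := hkt i; omega
    rw [h2] at h1
    exact le_trans (Finset.card_le_card hsub) h1
  by_cases hall : ∀ i, (F i).card ≤ m i
  · exact Finset.prod_le_prod' fun i _ => hall i
  push_neg at hall
  obtain ⟨p, hp⟩ := hall
  -- F p is not a star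
  have hns : ∀ S : Finset (Fin n), S.card = t → ∃ A ∈ F p, ¬ S ⊆ A := by
    intro S hS
    by_contra h
    push_neg at h
    exact absurd (hstar S p hS h) (not_le.mpr hp)
  -- pick q ≠ p
  set q : Fin r := if p.val = 0 then ⟨1, by omega⟩ else ⟨0, by omega⟩ with hq
  have hqp : q ≠ p := by
    rw [hq]
    split <;> (rename_i h; intro hc; rw [Fin.ext_iff] at hc; simp at hc; omega)
  set C1 := K.choose t with hC1
  set C2 := (2*K).choose (t+1) with hC2
  have hC1pos : 1 ≤ C1 := Nat.choose_pos hKt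
  -- crude bound on F p
  obtain ⟨B0, hB0⟩ := hemp q
  have hcrude : (F p).card ≤ C1 * m p := by
    have hsub : F p ⊆ (B0.powersetCard t).biUnion
        (fun S => Finset.univ.filter (fun A => S ⊆ A ∧ A.card ≤ kk p)) := by
      intro A hA
      have hint : t ≤ (A ∩ B0).card := hcross p q (Ne.symm hqp) A hA B0 hB0
      obtain ⟨S, hSsub, hScard⟩ := Finset.exists_subset_card_eq hint
      refine mem_biUnion.2 ⟨S, ?_, ?_⟩
      · rw [mem_powersetCard]
        exact ⟨hSsub.trans (inter_subset_right), hScard⟩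
      · rw [mem_filter]
        exact ⟨mem_univ _, hSsub.trans (inter_subset_left), hcard p A hA⟩
    calc (F p).card ≤ _ := Finset.card_le_card hsub
      _ ≤ ∑ S ∈ B0.powersetCard t, (Finset.univ.filter
            (fun A => S ⊆ A ∧ A.card ≤ kk p)).card := card_biUnion_le
      _ ≤ ∑ S ∈ B0.powersetCard t, m p := by
          refine Finset.sum_le_sum fun S hS => ?_
          rw [mem_powersetCard] at hS
          have h1 := cnt S (kk p)
          rw [hS.2] at h1
          have h2 : kk p + 1 - t = kk p - t + 1 := by have := hkt p; omega
          rw [h2] at h1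
          exact h1
      _ = (B0.powersetCard t).card * m p := by rw [Finset.sum_const, smul_eq_mul]
      _ ≤ C1 * m p := by
          refine Nat.mul_le_mul_right _ ?_
          rw [card_powersetCard]
          exact Nat.choose_le_choose _ ((hcard q B0 hB0).trans (hkK q))
  -- non-star gain bound for every j ≠ p
  obtain ⟨A1, hA1⟩ := hemp p
  have hgain : ∀ j, j ≠ p →
      (F j).card ≤ C1 * C2 * ∑ s ∈ Finset.range (kk j - t), (n - t - 1).choose s := by
    intro j hjp
    have hgS : ∀ S ∈ A1.powersetCard t, ∃ A ∈ F p, ¬ S ⊆ A := by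
      intro S hS
      rw [mem_powersetCard] at hS
      exact hns S hS.2
    choose g hg1 hg2 using hgS
    have hsub : F j ⊆ (A1.powersetCard t).biUnion (fun S =>
        if hS : S ∈ A1.powersetCard t then
          ((A1 ∪ g S hS).powersetCard (t+1)).biUnion
            (fun T => Finset.univ.filter (fun B => T ⊆ B ∧ B.card ≤ kk j))
        else ∅) := by
      intro B hB
      have hint : t ≤ (B ∩ A1).card := hcross j p hjp B hB A1 hA1
      obtain ⟨S, hSsub, hScard⟩ := Finset.exists_subset_card_eq hint
      have hSmem : S ∈ A1.powersetCard t :=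
        mem_powersetCard.2 ⟨hSsub.trans inter_subset_right, hScard⟩
      have hint2 : t ≤ (B ∩ g S hSmem).card :=
        hcross j p hjp B hB (g S hSmem) (hg1 S hSmem)
      -- find x ∈ (B ∩ g S) \ S
      have hx : ∃ x, x ∈ B ∩ g S hSmem ∧ x ∉ S := by
        by_contra h
        push_neg at h
        have hsub2 : B ∩ g S hSmem ⊆ S ∩ g S hSmem := fun x hxm =>
          mem_inter.2 ⟨h x hxm, (mem_inter.1 hxm).2⟩
        have hss : S ∩ g S hSmem ⊂ S := by
          refine ssubset_iff_of_subset inter_subset_left |>.2 ?_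
          obtain ⟨y, hy1, hy2⟩ := not_subset.1 (hg2 S hSmem)
          exact ⟨y, hy1, fun hc => hy2 (mem_inter.1 hc).2⟩
        have h4 : (B ∩ g S hSmem).card < S.card :=
          lt_of_le_of_lt (card_le_card hsub2) (card_lt_card hss)
        rw [hScard] at h4
        omega
      obtain ⟨x, hx1, hx2⟩ := hx
      refine mem_biUnion.2 ⟨S, hSmem, ?_⟩
      rw [dif_pos hSmem]
      refine mem_biUnion.2 ⟨insert x S, ?_, ?_⟩
      · rw [mem_powersetCard]
        constructor
        · intro y hy
          rcases mem_insert.1 hy with h | h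
          · subst h; exact mem_union_right _ (mem_inter.1 hx1).2
          · exact mem_union_left _ (hSsub h |> mem_inter.1 |>.2)
        · rw [card_insert_of_notMem hx2, hScard]
      · rw [mem_filter]
        refine ⟨mem_univ _, ?_, hcard j B hB⟩
        intro y hy
        rcases mem_insert.1 hy with h | h
        · subst h; exact (mem_inter.1 hx1).1
        · exact (mem_inter.1 (hSsub h)).1
    have hNT : ∀ (T : Finset (Fin n)), T.card = t + 1 →
        (Finset.univ.filter (fun B => T ⊆ B ∧ B.card ≤ kk j)).card
          ≤ ∑ s ∈ Finset.range (kk j - t), (n - t - 1).choose s := by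
      intro T hT
      have h1 := cnt T (kk j)
      rw [hT] at h1
      have h2 : kk j + 1 - (t + 1) = kk j - t := by omega
      have h3 : n - (t + 1) = n - t - 1 := by omega
      rw [h2, h3] at h1
      exact h1
    calc (F j).card ≤ _ := Finset.card_le_card hsub
      _ ≤ ∑ S ∈ A1.powersetCard t, (C2 * ∑ s ∈ Finset.range (kk j - t), (n - t - 1).choose s) := by
          refine le_trans card_biUnion_le (Finset.sum_le_sum fun S hS => ?_)
          rw [dif_pos hS]
          calc _ ≤ ∑ T ∈ (A1 ∪ g S hS).powersetCard (t+1),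
                (Finset.univ.filter (fun B => T ⊆ B ∧ B.card ≤ kk j)).card := card_biUnion_le
            _ ≤ ∑ T ∈ (A1 ∪ g S hS).powersetCard (t+1),
                (∑ s ∈ Finset.range (kk j - t), (n - t - 1).choose s) := by
                refine Finset.sum_le_sum fun T hT => ?_
                rw [mem_powersetCard] at hT
                exact hNT T hT.2
            _ = ((A1 ∪ g S hS).powersetCard (t+1)).card *
                (∑ s ∈ Finset.range (kk j - t), (n - t - 1).choose s) := by
                rw [Finset.sum_const, smul_eq_mul]
            _ ≤ C2 * ∑ s ∈ Finset.range (kk j - t), (n - t - 1).choose s := by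
                refine Nat.mul_le_mul_right _ ?_
                rw [card_powersetCard]
                refine Nat.choose_le_choose _ ?_
                calc (A1 ∪ g S hS).card ≤ A1.card + (g S hS).card := card_union_le _ _
                  _ ≤ kk p + kk p := Nat.add_le_add (hcard p A1 hA1) (hcard p _ (hg1 S hS))
                  _ ≤ 2 * K := by have := hkK p; omega
      _ = (A1.powersetCard t).card *
            (C2 * ∑ s ∈ Finset.range (kk j - t), (n - t - 1).choose s) := by
          rw [Finset.sum_const, smul_eq_mul]
      _ ≤ C1 * C2 * ∑ s ∈ Finset.range (kk j - t), (n - t - 1).choose s := by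
          rw [← mul_assoc]
          refine Nat.mul_le_mul_right _ (Nat.mul_le_mul_right _ ?_)
          rw [card_powersetCard]
          exact Nat.choose_le_choose _ ((hcard p A1 hA1).trans (hkK p))
  -- strong bound for all j ≠ p
  have hstep : ∀ j, j ≠ p → C1 * (F j).card ≤ m j := by
    intro j hjp
    by_cases hkj : kk j = t
    · exfalso
      have h0 := hgain j hjp
      rw [hkj, Nat.sub_self, Finset.range_zero, Finset.sum_empty, Nat.mul_zero] at h0
      have := Finset.card_pos.2 (hemp j)
      omega
    have huj : 1 ≤ kk j - t := by have := hkt j; omega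
    have hkey := key K t n (kk j - t) ht huj (by have := hkK j; have := hkt j; omega) hn
    have h1 : C1 * (F j).card ≤ C1^2 * C2 * ∑ s ∈ Finset.range (kk j - t), (n - t - 1).choose s := by
      calc C1 * (F j).card ≤ C1 * (C1 * C2 * ∑ s ∈ Finset.range (kk j - t), (n - t - 1).choose s) :=
            Nat.mul_le_mul_left _ (hgain j hjp)
        _ = C1^2 * C2 * ∑ s ∈ Finset.range (kk j - t), (n - t - 1).choose s := by ring
    refine h1.trans (hkey.trans ?_)
    have hmem : kk j - t ∈ Finset.range (kk j - t + 1) := by rw [Finset.mem_range]; omega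
    exact Finset.single_le_sum (f := fun s => (n - t).choose s) (fun s _ => Nat.zero_le _) hmem
  have hweak : ∀ j, j ≠ p → (F j).card ≤ m j := by
    intro j hjp
    have := hstep j hjp
    nlinarith [Nat.one_le_iff_ne_zero.1 hC1pos]
  -- final product assembly
  have hqmem : q ∈ Finset.univ.erase p := mem_erase.2 ⟨hqp, mem_univ q⟩
  rw [← Finset.mul_prod_erase Finset.univ _ (mem_univ p),
      ← Finset.mul_prod_erase _ _ hqmem,
      ← Finset.mul_prod_erase Finset.univ m (mem_univ p),
      ← Finset.mul_prod_erase _ m hqmem]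
  have hpq : (F p).card * ((F q).card * ∏ i ∈ (Finset.univ.erase p).erase q, (F i).card)
      ≤ m p * (m q * ∏ i ∈ (Finset.univ.erase p).erase q, m i) := by
    have h1 : (F p).card * (F q).card ≤ m p * m q := by
      calc (F p).card * (F q).card ≤ (C1 * m p) * (F q).card :=
            Nat.mul_le_mul_right _ hcrude
        _ = m p * (C1 * (F q).card) := by ring
        _ ≤ m p * m q := Nat.mul_le_mul_left _ (hstep q hqp)
    have h2 : ∏ i ∈ (Finset.univ.erase p).erase q, (F i).card
        ≤ ∏ i ∈ (Finset.univ.erase p).erase q, m i := by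
      refine Finset.prod_le_prod' fun i hi => ?_
      exact hweak i (mem_erase.1 (mem_erase.1 hi).2).1
    calc (F p).card * ((F q).card * ∏ i ∈ (Finset.univ.erase p).erase q, (F i).card)
        = ((F p).card * (F q).card) * ∏ i ∈ (Finset.univ.erase p).erase q, (F i).card := by ring
      _ ≤ (m p * m q) * ∏ i ∈ (Finset.univ.erase p).erase q, m i := Nat.mul_le_mul h1 h2
      _ = m p * (m q * ∏ i ∈ (Finset.univ.erase p).erase q, m i) := by ring
  exact hpq
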